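/- Let (a_L) be a sequence of nonnegative reals and c₁, c₂, c₃ ≥ 0 constants such that for all L, a_L ≤ c₁·sqrt(C/L + a_L²·sqrt(C/L) + c₂ a_L⁴) + c₃ a_L² for some C > 0, and suppose a_L → 0 as L → ∞. Then a_L = O(sqrt(C/L)). -/

import Mathlib

open Filter

/-- Self-bounding convergence rate: if a nonnegative sequence `a_L → 0` satisfies
`a_L ≤ c₁ √(C/L + a_L² √(C/L) + c₂ a_L⁴) + c₃ a_L²` for all `L ≥ 1`,
then `a_L = O(√(C/L))`. -/
theorem self_bounding_rate (a : ℕ → ℝ) (c₁ c₂ c₃ C : ℝ)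
    (hc₁ : 0 ≤ c₁) (hc₂ : 0 ≤ c₂) (hc₃ : 0 ≤ c₃) (hC : 0 < C)
    (hnn : ∀ L, 0 ≤ a L)
    (hbound : ∀ L : ℕ, 1 ≤ L →
      a L ≤ c₁ * Real.sqrt (C / (L : ℝ) + a L ^ 2 * Real.sqrt (C / (L : ℝ)) + c₂ * a L ^ 4)
        + c₃ * a L ^ 2)
    (hlim : Tendsto a atTop (nhds 0)) :
    (fun L : ℕ => a L) =O[atTop] (fun L : ℕ => Real.sqrt (C / (L : ℝ))) := by
  set ε : ℝ := min (1 / (4 * (c₁ + 1))) (1 / (4 * (c₁ * Real.sqrt c₂ + c₃ + 1))) with hεdef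
  have hsc₂ : 0 ≤ Real.sqrt c₂ := Real.sqrt_nonneg _
  have hεpos : 0 < ε := by
    apply lt_min <;> positivity
  have hε1 : c₁ * ε ≤ 1 / 4 := by
    have h1 : ε ≤ 1 / (4 * (c₁ + 1)) := min_le_left _ _
    have h2 : 0 < 4 * (c₁ + 1) := by positivity
    rw [le_div_iff₀ h2] at h1
    nlinarith [hεpos.le]
  have hε2 : (c₁ * Real.sqrt c₂ + c₃) * ε ≤ 1 / 4 := by
    have h1 : ε ≤ 1 / (4 * (c₁ * Real.sqrt c₂ + c₃ + 1)) := min_le_right _ _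
    have h2 : 0 < 4 * (c₁ * Real.sqrt c₂ + c₃ + 1) := by positivity
    rw [le_div_iff₀ h2] at h1
    nlinarith [hεpos.le]
  clear_value ε
  clear hεdef
  have hb0 : Tendsto (fun L : ℕ => Real.sqrt (C / (L : ℝ))) atTop (nhds 0) := by
    have h := tendsto_const_div_atTop_nhds_zero_nat C
    have := (Real.continuous_sqrt.tendsto 0).comp h
    simpa only [Function.comp_def, Real.sqrt_zero] using this
  have hsb0 : Tendsto (fun L : ℕ => Real.sqrt (Real.sqrt (C / (L : ℝ)))) atTop (nhds 0) := by
    have := (Real.continuous_sqrt.tendsto 0).comp hb0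
    simpa only [Function.comp_def, Real.sqrt_zero] using this
  rw [Asymptotics.isBigO_iff]
  refine ⟨2 * c₁, ?_⟩
  have h1 : ∀ᶠ L in atTop, a L < ε := hlim.eventually (gt_mem_nhds hεpos)
  have h2 : ∀ᶠ L : ℕ in atTop, Real.sqrt (Real.sqrt (C / (L : ℝ))) < ε :=
    hsb0.eventually (gt_mem_nhds hεpos)
  filter_upwards [h1, h2, eventually_ge_atTop 1] with L ha hs hL
  have hL1 : (1 : ℝ) ≤ (L : ℝ) := by exact_mod_cast hL
  set b : ℝ := Real.sqrt (C / (L : ℝ)) with hbdef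
  set s : ℝ := Real.sqrt b with hsdef
  have hCL : 0 ≤ C / (L : ℝ) := by positivity
  have hbnn : 0 ≤ b := Real.sqrt_nonneg _
  have hsnn : 0 ≤ s := Real.sqrt_nonneg _
  have hb2 : b ^ 2 = C / (L : ℝ) := Real.sq_sqrt hCL
  have hs2 : s ^ 2 = b := Real.sq_sqrt hbnn
  have hc2sq : Real.sqrt c₂ ^ 2 = c₂ := Real.sq_sqrt hc₂
  have hann : 0 ≤ a L := hnn L
  clear_value s b
  -- bound the inner sqrt
  have hinner : Real.sqrt (C / (L : ℝ) + a L ^ 2 * b + c₂ * a L ^ 4)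
      ≤ b + a L * s + Real.sqrt c₂ * a L ^ 2 := by
    have hrhs : 0 ≤ b + a L * s + Real.sqrt c₂ * a L ^ 2 := by positivity
    have hle : C / (L : ℝ) + a L ^ 2 * b + c₂ * a L ^ 4
        ≤ (b + a L * s + Real.sqrt c₂ * a L ^ 2) ^ 2 := by
      have expand : (b + a L * s + Real.sqrt c₂ * a L ^ 2) ^ 2
          = b ^ 2 + a L ^ 2 * s ^ 2 + Real.sqrt c₂ ^ 2 * a L ^ 4
            + 2 * b * (a L * s) + 2 * b * (Real.sqrt c₂ * a L ^ 2)
            + 2 * (a L * s) * (Real.sqrt c₂ * a L ^ 2) := by ring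
      rw [expand, hb2, hs2, hc2sq]
      have p1 : 0 ≤ 2 * b * (a L * s) := by positivity
      have p2 : 0 ≤ 2 * b * (Real.sqrt c₂ * a L ^ 2) := by positivity
      have p3 : 0 ≤ 2 * (a L * s) * (Real.sqrt c₂ * a L ^ 2) := by positivity
      linarith
    calc Real.sqrt (C / (L : ℝ) + a L ^ 2 * b + c₂ * a L ^ 4)
        ≤ Real.sqrt ((b + a L * s + Real.sqrt c₂ * a L ^ 2) ^ 2) := Real.sqrt_le_sqrt hle
      _ = b + a L * s + Real.sqrt c₂ * a L ^ 2 := Real.sqrt_sq hrhs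
  have hb' := hbound L hL
  rw [← hbdef] at hb'
  have key : a L ≤ c₁ * b + c₁ * (a L * s) + (c₁ * Real.sqrt c₂ + c₃) * a L ^ 2 := by
    have hmul := mul_le_mul_of_nonneg_left hinner hc₁
    have expand2 : c₁ * (b + a L * s + Real.sqrt c₂ * a L ^ 2) + c₃ * a L ^ 2
        = c₁ * b + c₁ * (a L * s) + (c₁ * Real.sqrt c₂ + c₃) * a L ^ 2 := by ring
    linarith
  -- absorb the higher-order terms
  clear hlim hbound hb0 hsb0 h1 h2 hb' hinner
  have t1 : c₁ * (a L * s) ≤ a L / 4 := by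
    have hsε : s ≤ ε := hs.le
    have k1 : c₁ * (a L * s) ≤ c₁ * ε * a L := by
      nlinarith [mul_nonneg (mul_nonneg hc₁ hann) (sub_nonneg.mpr hsε)]
    have k3 := mul_le_mul_of_nonneg_right hε1 hann
    linarith
  have t2 : (c₁ * Real.sqrt c₂ + c₃) * a L ^ 2 ≤ a L / 4 := by
    have haε : a L ≤ ε := ha.le
    have hcoef : 0 ≤ c₁ * Real.sqrt c₂ + c₃ := by positivity
    have k2 : (c₁ * Real.sqrt c₂ + c₃) * a L ^ 2 ≤ (c₁ * Real.sqrt c₂ + c₃) * ε * a L := by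
      nlinarith [mul_nonneg (mul_nonneg hcoef hann) (sub_nonneg.mpr haε)]
    have k3 := mul_le_mul_of_nonneg_right hε2 hann
    linarith
  have hfinal : a L ≤ 2 * c₁ * b := by linarith
  rw [Real.norm_of_nonneg hann, Real.norm_of_nonneg hbnn]
  exact hfinal
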